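/- Let ψ : Γ × Γ × G/N → U(1) and φ : Γ × G × G/N → U(1) satisfy, for all a, b, c ∈ Γ, g, h ∈ G, z ∈ G/N: (R1) ψ(b, c, z + χ(a)) · ψ(ba, c, z)⁻¹ · ψ(a, cb, z) · ψ(a, b, z)⁻¹ = 1; (R2) φ(b, g, z + χ(a)) · φ(ba, g, z)⁻¹ · φ(a, g, z) = ψ(a, b, z + π(g)) · ψ(a, b, z)⁻¹; (R3) φ(a, g + h, z) = φ(a, h, z + π(g)) · φ(a, g, z); and suppose ⟨χ̂(a), n⟩ = φ(a, n, 0)⁻¹ for all a ∈ Γ, n ∈ N. Define ψ̂(a, b, ẑ) := ψ(a, b, 0) · φ(b, σ(χ(a)), 0)⁻¹ · ⟨χ̂(ba) + ẑ, σ(χ(ba)) − σ(χ(a)) − σ(χ(b))⟩, and set φ̃(a, z) := φ(a, σ(z), 0) · ⟨σ̂(χ̂(a)), σ(z)⟩ and s(a) := ⟨σ̂(χ̂(a)), σ(χ(a))⟩. Then for all a, b ∈ Γ, z ∈ G/N, ẑ ∈ Ĝ/N⊥: ψ(a, b, z) · ψ̂(a, b, ẑ)⁻¹ = [φ̃(b,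 z + χ(a)) · φ̃(ba, z)⁻¹ · φ̃(a, z)] · [s(b) · s(ba)⁻¹ · s(a)] · (χ⊔χ̂)(a, b, z, ẑ). -/

import Mathlib

/-- For a dualisable dynamical-triple cocycle `(ψ, φ, 1)` (hypotheses (R1)–(R3)), the dual
homomorphism `χ̂` with `⟨χ̂(a), n⟩ = φ(a, n, 0)⁻¹`, and the dual cocycle
`ψ̂(a,b,ẑ) := ψ(a,b,0) · φ(b,σ(χ(a)),0)⁻¹ · ⟨χ̂(ba)+ẑ, σ(χ(ba))−σ(χ(a))−σ(χ(b))⟩`,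
setting `φ̃(a,z) := φ(a,σ(z),0)·⟨σ̂(χ̂(a)),σ(z)⟩` and `s(a) := ⟨σ̂(χ̂(a)),σ(χ(a))⟩`,
one has
`ψ(a,b,z) · ψ̂(a,b,ẑ)⁻¹
  = [φ̃(b,z+χ(a))·φ̃(ba,z)⁻¹·φ̃(a,z)] · [s(b)·s(ba)⁻¹·s(a)] · (χ⊔χ̂)(a,b,z,ẑ)`. -/
theorem statement7
    {Γ : Type*} [Group Γ] [Finite Γ]
    {G : Type*} [AddCommGroup G] [TopologicalSpace G] [IsTopologicalAddGroup G]
      [LocallyCompactSpace G] [SecondCountableTopology G] [T2Space G]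
    (N : AddSubgroup G) [DiscreteTopology N] [CompactSpace (G ⧸ N)]
    -- the Pontryagin dual of `G`, abstracted by its pairing with `G`
    {Ghat : Type*} [AddCommGroup Ghat]
    (e : Ghat → G → Circle)
    (he₁ : ∀ (x y : Ghat) (g : G), e (x + y) g = e x g * e y g)
    (he₂ : ∀ (x : Ghat) (g h : G), e x (g + h) = e x g * e x h)
    -- the annihilator `N⊥` of `N`
    (Nperp : AddSubgroup Ghat)
    (hNperp : ∀ x : Ghat, x ∈ Nperp ↔ ∀ n ∈ N, e x (n : G) = 1)
    -- the well-defined pairing of `Ĝ/N⊥` with `N`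
    (eQN : Ghat ⧸ Nperp → N → Circle)
    (heQN : ∀ (x : Ghat) (n : N), eQN (x : Ghat ⧸ Nperp) n = e x (n : G))
    -- the well-defined pairing of `N⊥` with `G/N`
    (ePQ : Nperp → G ⧸ N → Circle)
    (hePQ : ∀ (p : Nperp) (g : G), ePQ p ((g : G) : G ⧸ N) = e (p : Ghat) g)
    -- the homomorphisms `χ` and `χ̂`
    (χ : Γ → G ⧸ N) (hχ : ∀ a b : Γ, χ (a * b) = χ a + χ b)
    (χhat : Γ → Ghat ⧸ Nperp) (hχhat : ∀ a b : Γ, χhat (a * b) = χhat a + χhat b)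
    -- set-theoretic sections `σ` and `σ̂` of the quotient maps
    (σ : G ⧸ N → G) (hσ : ∀ z : G ⧸ N, ((σ z : G) : G ⧸ N) = z)
    (σh : Ghat ⧸ Nperp → Ghat) (hσh : ∀ zh : Ghat ⧸ Nperp, ((σh zh : Ghat) : Ghat ⧸ Nperp) = zh)
    -- `η(a,b) ∈ N`, `η̂(a,b) ∈ N⊥`, and `σ(χ(ba)) − σ(χ(a)) − σ(χ(b)) = −η(a,b) ∈ N`
    (hη : ∀ a b : Γ, σ (χ b) - σ (χ (b * a)) + σ (χ a) ∈ N)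
    (hηhat : ∀ a b : Γ, σh (χhat b) - σh (χhat (b * a)) + σh (χhat a) ∈ Nperp)
    (hη' : ∀ a b : Γ, σ (χ (b * a)) - σ (χ a) - σ (χ b) ∈ N)
    -- `γ` and the cocycle `χ⊔χ̂`
    (γ : Γ → Γ → Circle)
    (hγ : ∀ a b : Γ, γ a b = e (σh (χhat a)) (σ (χ b)) *
      (ePQ ⟨σh (χhat b) - σh (χhat (b * a)) + σh (χhat a), hηhat a b⟩ (χ (b * a)))⁻¹)
    (sq : Γ → Γ → G ⧸ N → Ghat ⧸ Nperp → Circle)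
    (hsq : ∀ (a b : Γ) (z : G ⧸ N) (zh : Ghat ⧸ Nperp),
      sq a b z zh = γ a b *
        (ePQ ⟨σh (χhat b) - σh (χhat (b * a)) + σh (χhat a), hηhat a b⟩ z)⁻¹ *
        eQN zh ⟨σ (χ b) - σ (χ (b * a)) + σ (χ a), hη a b⟩)
    -- the cocycle data `(ψ, φ, 1)` of a dualisable dynamical triple
    (ψ : Γ → Γ → (G ⧸ N) → Circle) (φ : Γ → G → (G ⧸ N) → Circle)
    (R1 : ∀ (a b c : Γ) (z : G ⧸ N),
      ψ b c (z + χ a) * (ψ (b * a) c z)⁻¹ * ψ a (c * b) z * (ψ a b z)⁻¹ = 1)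
    (R2 : ∀ (a b : Γ) (g : G) (z : G ⧸ N),
      φ b g (z + χ a) * (φ (b * a) g z)⁻¹ * φ a g z = ψ a b (z + (g : G ⧸ N)) * (ψ a b z)⁻¹)
    (R3 : ∀ (a : Γ) (g h : G) (z : G ⧸ N),
      φ a (g + h) z = φ a h (z + (g : G ⧸ N)) * φ a g z)
    (hpair : ∀ (a : Γ) (n : N), eQN (χhat a) n = (φ a (n : G) 0)⁻¹)
    -- the dual cocycle `ψ̂`
    (ψhat : Γ → Γ → (Ghat ⧸ Nperp) → Circle)
    (hψhat : ∀ (a b : Γ) (zh : Ghat ⧸ Nperp),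
      ψhat a b zh = ψ a b 0 * (φ b (σ (χ a)) 0)⁻¹ *
        eQN (χhat (b * a) + zh) ⟨σ (χ (b * a)) - σ (χ a) - σ (χ b), hη' a b⟩)
    -- `φ̃(a,z) := φ(a,σ(z),0) · ⟨σ̂(χ̂(a)), σ(z)⟩` and `s(a) := ⟨σ̂(χ̂(a)), σ(χ(a))⟩`
    (φt : Γ → (G ⧸ N) → Circle)
    (hφt : ∀ (a : Γ) (z : G ⧸ N), φt a z = φ a (σ z) 0 * e (σh (χhat a)) (σ z))
    (s : Γ → Circle)
    (hs : ∀ a : Γ, s a = e (σh (χhat a)) (σ (χ a))) :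
    ∀ (a b : Γ) (z : G ⧸ N) (zh : Ghat ⧸ Nperp),
      ψ a b z * (ψhat a b zh)⁻¹ =
        (φt b (z + χ a) * (φt (b * a) z)⁻¹ * φt a z) *
          (s b * (s (b * a))⁻¹ * s a) * sq a b z zh := by
  
  intro a b z zh
  -- basic consequences of bilinearity
  have e0l : ∀ g : G, e 0 g = 1 := by
    intro g
    have h := he₁ 0 0 g
    rw [add_zero] at h
    exact left_eq_mul.mp h
  have e0r : ∀ x : Ghat, e x 0 = 1 := by
    intro x
    have h := he₂ x 0 0
    rw [add_zero] at h
    exact left_eq_mul.mp h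
  have enl : ∀ (x : Ghat) (g : G), e (-x) g = (e x g)⁻¹ := by
    intro x g
    have h := he₁ x (-x) g
    rw [add_neg_cancel, e0l] at h
    exact eq_inv_of_mul_eq_one_right h.symm
  have enr : ∀ (x : Ghat) (g : G), e x (-g) = (e x g)⁻¹ := by
    intro x g
    have h := he₂ x g (-g)
    rw [add_neg_cancel, e0r] at h
    exact eq_inv_of_mul_eq_one_right h.symm
  -- the element n := σ(z+χ(a)) − (σ(χ(a)) + σ(z)) lies in N
  have hq0 : ((σ (z + χ a) - (σ (χ a) + σ z) : G) : G ⧸ N) = 0 := by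
    rw [QuotientAddGroup.mk_sub, QuotientAddGroup.mk_add, hσ, hσ, hσ]
    abel
  have hnN : σ (z + χ a) - (σ (χ a) + σ z) ∈ N :=
    (QuotientAddGroup.eq_zero_iff _).mp hq0
  -- pairing of χ̂(b) with n
  have hφn : φ b (σ (z + χ a) - (σ (χ a) + σ z)) 0
      = (e (σh (χhat b)) (σ (z + χ a) - (σ (χ a) + σ z)))⁻¹ := by
    have h1 := hpair b ⟨_, hnN⟩
    have h2 := heQN (σh (χhat b)) ⟨_, hnN⟩
    rw [hσh] at h2
    rw [h2] at h1
    rw [show φ b (σ (z + χ a) - (σ (χ a) + σ z)) 0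
        = φ b ((⟨_, hnN⟩ : N) : G) 0 from rfl, h1, inv_inv]
  -- split φ(b, σ(z+χ(a)), 0)
  have hφb : φ b (σ (z + χ a)) 0
      = φ b (σ (χ a) + σ z) 0 * (e (σh (χhat b)) (σ (z + χ a) - (σ (χ a) + σ z)))⁻¹ := by
    have h3 := R3 b (σ (z + χ a) - (σ (χ a) + σ z)) (σ (χ a) + σ z) 0
    rw [sub_add_cancel, hq0, add_zero] at h3
    rw [h3, hφn]
  -- split φ(b, σ(χ(a)) + σ(z), 0)
  have h2 : φ b (σ (χ a) + σ z) 0 = φ b (σ z) (χ a) * φ b (σ (χ a)) 0 := by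
    have h := R3 b (σ (χ a)) (σ z) 0
    rwa [hσ, zero_add] at h
  have h2' : φ b (σ z) (χ a) = φ b (σ (χ a) + σ z) 0 * (φ b (σ (χ a)) 0)⁻¹ :=
    eq_mul_inv_iff_mul_eq.mpr h2.symm
  -- relate ψ(a,b,z) to ψ(a,b,0)
  have hR2 := R2 a b (σ z) 0
  rw [zero_add, hσ, zero_add] at hR2
  have h1 : ψ a b z
      = φ b (σ z) (χ a) * (φ (b * a) (σ z) 0)⁻¹ * φ a (σ z) 0 * ψ a b 0 :=
    mul_inv_eq_iff_eq_mul.mp hR2.symm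
  -- pairings rewritten through representatives
  have h6 : eQN (χhat (b * a) + zh) ⟨σ (χ (b * a)) - σ (χ a) - σ (χ b), hη' a b⟩
      = e (σh (χhat (b * a)) + σh zh) (σ (χ (b * a)) - σ (χ a) - σ (χ b)) := by
    have h := heQN (σh (χhat (b * a)) + σh zh)
      ⟨σ (χ (b * a)) - σ (χ a) - σ (χ b), hη' a b⟩
    rwa [QuotientAddGroup.mk_add, hσh, hσh] at h
  have h7 : eQN zh ⟨σ (χ b) - σ (χ (b * a)) + σ (χ a), hη a b⟩
      = e (σh zh) (σ (χ b) - σ (χ (b * a)) + σ (χ a)) := by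
    have h := heQN (σh zh) ⟨σ (χ b) - σ (χ (b * a)) + σ (χ a), hη a b⟩
    rwa [hσh] at h
  have h8 : ePQ ⟨σh (χhat b) - σh (χhat (b * a)) + σh (χhat a), hηhat a b⟩ (χ (b * a))
      = e (σh (χhat b) - σh (χhat (b * a)) + σh (χhat a)) (σ (χ (b * a))) := by
    have h := hePQ ⟨σh (χhat b) - σh (χhat (b * a)) + σh (χhat a), hηhat a b⟩
      (σ (χ (b * a)))
    rwa [hσ] at h
  have h9 : ePQ ⟨σh (χhat b) - σh (χhat (b * a)) + σh (χhat a), hηhat a b⟩ z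
      = e (σh (χhat b) - σh (χhat (b * a)) + σh (χhat a)) (σ z) := by
    have h := hePQ ⟨σh (χhat b) - σh (χhat (b * a)) + σh (χhat a), hηhat a b⟩ (σ z)
    rwa [hσ] at h
  -- annihilation of η by η̂
  have hperp' : e (σh (χhat b) - σh (χhat (b * a)) + σh (χhat a))
      (σ (χ (b * a)) - σ (χ a) - σ (χ b)) = 1 :=
    (hNperp _).mp (hηhat a b) _ (hη' a b)
  have hCh' : e (σh (χhat (b * a))) (σ (χ (b * a)) - σ (χ a) - σ (χ b))
      = e (σh (χhat a)) (σ (χ (b * a)) - σ (χ a) - σ (χ b)) *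
        e (σh (χhat b)) (σ (χ (b * a)) - σ (χ a) - σ (χ b)) := by
    have hid : σh (χhat (b * a)) =
        σh (χhat a) + σh (χhat b) +
          -(σh (χhat b) - σh (χhat (b * a)) + σh (χhat a)) := by abel
    rw [hid, he₁, he₁, enl, hperp', inv_one, mul_one]
  -- main computation
  rw [hψhat a b zh, hφt b (z + χ a), hφt (b * a) z, hφt a z, hs b, hs (b * a), hs a,
    hsq a b z zh, hγ a b, h6,
    he₁ (σh (χhat (b * a))) (σh zh) (σ (χ (b * a)) - σ (χ a) - σ (χ b)),
    hCh', h1, h2', hφb, h7, h8, h9]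
  simp only [he₁, he₂, sub_eq_add_neg, enl, enr]
  refine Additive.ofMul.injective ?_
  simp only [ofMul_mul, ofMul_inv]
  abel
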